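/- Let h : ℝ^n → ℝ be a non-constant multilinear polynomial (each variable appears with degree at most one). Then for every point a ∈ ℝ^n there exist ε₀ > 0 and directions v⁺, v⁻ ∈ ℝ^n such that for all ε ∈ (0, ε₀): h(a + εv⁺) > h(a) and h(a + εv⁻) < h(a). In particular, h has no local extrema. -/

import Mathlib

open Finset

/-- **Non-constant multilinear polynomials have no local extrema.** If
`h(a) = Σ_{S⊆[n]} ĥ(S) ∏_{i∈S} a_i` is a multilinear polynomial with some nonzero
coefficient `ĥ(S)` for `S ≠ ∅`, then at every point `a` there are `ε₀ > 0` and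
directions `v⁺, v⁻` with `h(a + εv⁺) > h(a)` and `h(a + εv⁻) < h(a)` for all
`ε ∈ (0, ε₀)`; in particular `h` has no local extremum at `a`. -/
theorem multilinear_no_local_extrema (n : ℕ)
    (hcoef : Finset (Fin n) → ℝ) (h : (Fin n → ℝ) → ℝ)
    (hrep : ∀ a, h a = ∑ S : Finset (Fin n), hcoef S * ∏ i ∈ S, a i)
    (hnc : ∃ S : Finset (Fin n), S ≠ ∅ ∧ hcoef S ≠ 0) :
    ∀ a : Fin n → ℝ,
      (∃ ε₀ > (0 : ℝ), ∃ vp vm : Fin n → ℝ, ∀ ε ∈ Set.Ioo (0 : ℝ) ε₀,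
        h a < h (a + ε • vp) ∧ h (a + ε • vm) < h a) ∧
      ¬ IsLocalExtr h a := by
  classical
  intro a
  set c : Finset (Fin n) → ℝ :=
    fun T => ∑ S : Finset (Fin n), if T ⊆ S then hcoef S * ∏ i ∈ S \ T, a i else 0 with hcdef
  -- shifted expansion
  have hexp : ∀ x : Fin n → ℝ,
      h (a + x) = ∑ T : Finset (Fin n), c T * ∏ i ∈ T, x i := by
    intro x
    rw [hrep]
    calc ∑ S : Finset (Fin n), hcoef S * ∏ i ∈ S, (a + x) i
        = ∑ S : Finset (Fin n), ∑ T : Finset (Fin n),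
            (if T ⊆ S then hcoef S * ∏ i ∈ S \ T, a i else 0) * ∏ i ∈ T, x i := by
          refine Finset.sum_congr rfl fun S _ => ?_
          have hpa : (∏ i ∈ S, (a + x) i)
              = ∑ T ∈ S.powerset, (∏ i ∈ T, x i) * ∏ i ∈ S \ T, a i := by
            simpa [add_comm] using Finset.prod_add (fun i => x i) (fun i => a i) S
          rw [hpa, Finset.mul_sum]
          have hps : S.powerset = Finset.univ.filter (fun T => T ⊆ S) := by
            ext T; simp
          rw [hps, Finset.sum_filter]
          refine Finset.sum_congr rfl fun T _ => ?_
          split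
          · ring
          · simp
      _ = ∑ T : Finset (Fin n), c T * ∏ i ∈ T, x i := by
          rw [Finset.sum_comm]
          refine Finset.sum_congr rfl fun T _ => ?_
          rw [hcdef, ← Finset.sum_mul]
  have hc0 : c ∅ = h a := by
    rw [hrep, hcdef]
    simp
  -- a maximal-cardinality nonzero coefficient set
  obtain ⟨S₁, hS₁ne, hS₁c⟩ := hnc
  have hset : (Finset.univ.filter fun S : Finset (Fin n) => S ≠ ∅ ∧ hcoef S ≠ 0).Nonempty :=
    ⟨S₁, by simp [hS₁ne, hS₁c]⟩
  obtain ⟨S₀, hS₀mem, hS₀max⟩ := Finset.exists_max_image _ (fun S => S.card) hset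
  simp only [Finset.mem_filter, Finset.mem_univ, true_and] at hS₀mem hS₀max
  have hcS₀ : c S₀ = hcoef S₀ := by
    simp only [hcdef]
    rw [Finset.sum_eq_single S₀]
    · simp
    · intro S _ hne
      by_cases hsub : S₀ ⊆ S
      · have hz : hcoef S = 0 := by
          by_contra hS
          have hSne : S ≠ ∅ := by
            intro h'
            subst h'
            exact hS₀mem.1 (Finset.subset_empty.mp hsub)
          have hle := hS₀max S ⟨hSne, hS⟩
          have hlt : S₀.card < S.card := Finset.card_lt_card (hsub.ssubset_of_ne (Ne.symm hne))
          omega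
        simp [hz]
      · simp [hsub]
    · simp
  -- minimal-cardinality nonempty T with c T ≠ 0
  have htset : (Finset.univ.filter fun T : Finset (Fin n) => T ≠ ∅ ∧ c T ≠ 0).Nonempty :=
    ⟨S₀, by simp [hS₀mem.1, hcS₀ ▸ hS₀mem.2]⟩
  obtain ⟨T₀, hT₀mem, hT₀min⟩ := Finset.exists_min_image _ (fun T => T.card) htset
  simp only [Finset.mem_filter, Finset.mem_univ, true_and] at hT₀mem hT₀min
  obtain ⟨hT₀ne, hcT₀⟩ := hT₀mem
  obtain ⟨i₀, hi₀⟩ := Finset.nonempty_iff_ne_empty.mpr hT₀ne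
  -- the direction with sign σ
  set v : ℝ → Fin n → ℝ :=
    fun σ i => if i = i₀ then σ else if i ∈ T₀ then 1 else 0 with hvdef
  have key : ∀ σ ε : ℝ, h (a + ε • v σ) = h a + c T₀ * σ * ε ^ T₀.card := by
    intro σ ε
    rw [hexp]
    have hzero : ∀ T ∈ (Finset.univ : Finset (Finset (Fin n))),
        T ∉ ({∅, T₀} : Finset (Finset (Fin n))) →
        c T * ∏ i ∈ T, (ε • v σ) i = 0 := by
      intro T _ hT
      simp only [Finset.mem_insert, Finset.mem_singleton] at hT
      push_neg at hT
      obtain ⟨hTne, hTne'⟩ := hT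
      by_cases hsub : T ⊆ T₀
      · have hlt : T.card < T₀.card := Finset.card_lt_card (hsub.ssubset_of_ne hTne')
        have hcz : c T = 0 := by
          by_contra hc
          have := hT₀min T ⟨Finset.nonempty_iff_ne_empty.mp hTne, hc⟩
          omega
        simp [hcz]
      · obtain ⟨i, hiT, hiT₀⟩ := Finset.not_subset.mp hsub
        have hvi : (ε • v σ) i = 0 := by
          have : i ≠ i₀ := fun h' => hiT₀ (h' ▸ hi₀)
          simp [hvdef, this, hiT₀]
        rw [Finset.prod_eq_zero hiT hvi, mul_zero]
    rw [← Finset.sum_subset (Finset.subset_univ ({∅, T₀} : Finset (Finset (Fin n)))) hzero]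
    rw [Finset.sum_pair (Ne.symm hT₀ne)]
    have hprod : ∏ i ∈ T₀, (ε • v σ) i = ε ^ T₀.card * σ := by
      have : ∀ i ∈ T₀, (ε • v σ) i = ε * v σ i := fun i _ => rfl
      rw [Finset.prod_congr rfl this, Finset.prod_mul_distrib, Finset.prod_const]
      congr 1
      rw [← Finset.mul_prod_erase _ _ hi₀]
      have h1 : ∀ i ∈ T₀.erase i₀, v σ i = 1 := by
        intro i hi
        have := Finset.ne_of_mem_erase hi
        have := Finset.mem_of_mem_erase hi
        simp [hvdef, *]
      rw [Finset.prod_eq_one h1]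
      simp [hvdef]
    rw [hprod]
    simp [hc0]
    ring
  -- choose signs
  set σp : ℝ := if 0 < c T₀ then 1 else -1 with hσp
  have hpos : 0 < c T₀ * σp := by
    rw [hσp]
    rcases lt_trichotomy (c T₀) 0 with hlt | heq | hgt
    · rw [if_neg (by linarith)]; nlinarith
    · exact absurd heq hcT₀
    · rw [if_pos hgt]; linarith
  have keyp : ∀ ε : ℝ, 0 < ε → h a < h (a + ε • v σp) := by
    intro ε hε
    rw [key]
    nlinarith [pow_pos hε T₀.card]
  have keym : ∀ ε : ℝ, 0 < ε → h (a + ε • v (-σp)) < h a := by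
    intro ε hε
    rw [key]
    nlinarith [pow_pos hε T₀.card]
  refine ⟨⟨1, one_pos, v σp, v (-σp), fun ε hε => ⟨keyp ε hε.1, keym ε hε.1⟩⟩, ?_⟩
  rintro (hmin | hmax)
  · -- local min contradicted by the decreasing direction
    have hcont : Continuous fun ε : ℝ => a + ε • v (-σp) := by fun_prop
    have htend : Filter.Tendsto (fun ε : ℝ => a + ε • v (-σp)) (nhdsWithin 0 (Set.Ioi 0)) (nhds a) := by
      have := (hcont.tendsto 0).mono_left (nhdsWithin_le_nhds (s := Set.Ioi (0:ℝ)))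
      simpa using this
    have h1 : ∀ᶠ ε in nhdsWithin (0:ℝ) (Set.Ioi 0), h a ≤ h (a + ε • v (-σp)) :=
      htend.eventually hmin
    have h2 : ∀ᶠ ε in nhdsWithin (0:ℝ) (Set.Ioi 0), (0:ℝ) < ε :=
      eventually_nhdsWithin_of_forall fun x hx => hx
    obtain ⟨ε, hle, hε⟩ := (h1.and h2).exists
    exact absurd hle (not_le.mpr (keym ε hε))
  · have hcont : Continuous fun ε : ℝ => a + ε • v σp := by fun_prop
    have htend : Filter.Tendsto (fun ε : ℝ => a + ε • v σp) (nhdsWithin 0 (Set.Ioi 0)) (nhds a) := by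
      have := (hcont.tendsto 0).mono_left (nhdsWithin_le_nhds (s := Set.Ioi (0:ℝ)))
      simpa using this
    have h1 : ∀ᶠ ε in nhdsWithin (0:ℝ) (Set.Ioi 0), h (a + ε • v σp) ≤ h a :=
      htend.eventually hmax
    have h2 : ∀ᶠ ε in nhdsWithin (0:ℝ) (Set.Ioi 0), (0:ℝ) < ε :=
      eventually_nhdsWithin_of_forall fun x hx => hx
    obtain ⟨ε, hle, hε⟩ := (h1.and h2).exists
    exact absurd hle (not_le.mpr (keyp ε hε))
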